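/- Let A be a C*-algebra, K a closed essential ideal, and S, T semiregular operators on A with S|_K = T|_K. Then S* = T* (equal domains and equal values). -/
import Mathlib


/-- A densely defined operator on a C*-algebra `A`, presented by a total function `toFun`
whose meaningful values are those on its domain `dom`.  The domain is a dense right ideal,
on which the operator is `ℂ`-linear and right `A`-linear (`S(a b) = (S a) b`). -/
structure UnboundedOp (A : Type*) [NonUnitalCStarAlgebra A] where
  dom : Set A
  toFun : A → A
  dense_dom : Dense dom
  zero_mem : (0 : A) ∈ dom
  add_mem : ∀ a ∈ dom, ∀ b ∈ dom, a + b ∈ dom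
  smul_mem : ∀ (c : ℂ), ∀ a ∈ dom, c • a ∈ dom
  mul_mem : ∀ a ∈ dom, ∀ x : A, a * x ∈ dom
  map_add' : ∀ a ∈ dom, ∀ b ∈ dom, toFun (a + b) = toFun a + toFun b
  map_smul' : ∀ (c : ℂ), ∀ a ∈ dom, toFun (c • a) = c • toFun a
  map_mul' : ∀ a ∈ dom, ∀ x : A, toFun (a * x) = toFun a * x

namespace UnboundedOp

variable {A : Type*} [NonUnitalCStarAlgebra A]

/-- The domain of the adjoint of `S`, with respect to the `A`-valued inner
product `⟨a, b⟩ = a* b` on `A`: those `a` admitting `c` with `⟨c, b⟩ = ⟨a, S b⟩`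
for all `b` in the domain of `S`. -/
def adjDom (S : UnboundedOp A) : Set A :=
  {a : A | ∃ c : A, ∀ b ∈ S.dom, star a * S.toFun b = star c * b}

/-- `S` is semiregular if (it is closable, which is automatic here, and) its
adjoint is densely defined. -/
def Semiregular (S : UnboundedOp A) : Prop := Dense S.adjDom

/-- `S` is a closed operator if its graph is closed. -/
def IsClosedOp (S : UnboundedOp A) : Prop :=
  IsClosed {p : A × A | p.1 ∈ S.dom ∧ p.2 = S.toFun p.1}

end UnboundedOp

/-- An ideal `K` of `A` is essential if it has trivial annihilator. -/
def TwoSidedIdeal.Essential {A : Type*} [NonUnitalCStarAlgebra A] (K : TwoSidedIdeal A) : Prop :=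
  ∀ a : A, (∀ k ∈ K, a * k = 0) → a = 0

/-- If two semiregular operators `S`, `T` on `A` have the same restriction to a closed
essential ideal `K`, then `S* = T*` (equal domains and equal values). -/
theorem stmt_7 {A : Type*} [NonUnitalCStarAlgebra A]
    (K : TwoSidedIdeal A) (hKc : IsClosed (K : Set A)) (hKe : K.Essential)
    (S T : UnboundedOp A) (hS : S.Semiregular) (hT : T.Semiregular)
    (hdom : S.dom ∩ (K : Set A) = T.dom ∩ (K : Set A))
    (hval : ∀ a ∈ S.dom ∩ (K : Set A), S.toFun a = T.toFun a) :
    S.adjDom = T.adjDom ∧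
      ∀ a c : A, ((∀ b ∈ S.dom, star a * S.toFun b = star c * b) ↔
        (∀ b ∈ T.dom, star a * T.toFun b = star c * b)) := by
  have key : ∀ S T : UnboundedOp A,
      S.dom ∩ (K : Set A) = T.dom ∩ (K : Set A) →
      (∀ a ∈ S.dom ∩ (K : Set A), S.toFun a = T.toFun a) →
      ∀ a c : A, (∀ b ∈ S.dom, star a * S.toFun b = star c * b) →
        ∀ b ∈ T.dom, star a * T.toFun b = star c * b := by
    intro S T hdom hval a c hac b hb
    have h0 : ∀ k ∈ K, (star a * T.toFun b - star c * b) * k = 0 := by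
      intro k hk
      have hbk : b * k ∈ T.dom ∩ (K : Set A) :=
        ⟨T.mul_mem b hb k, K.mul_mem_left b k hk⟩
      have hbkS : b * k ∈ S.dom ∩ (K : Set A) := by rw [hdom]; exact hbk
      have h1 : star a * S.toFun (b * k) = star c * (b * k) := hac _ hbkS.1
      have h2 : S.toFun (b * k) = T.toFun (b * k) := hval _ hbkS
      have h3 : T.toFun (b * k) = T.toFun b * k := T.map_mul' b hb k
      rw [sub_mul, mul_assoc, ← h3, ← h2, h1, mul_assoc, sub_self]
    exact sub_eq_zero.mp (hKe _ h0)
  have hdom' : T.dom ∩ (K : Set A) = S.dom ∩ (K : Set A) := hdom.symm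
  have hval' : ∀ a ∈ T.dom ∩ (K : Set A), T.toFun a = S.toFun a := by
    intro a ha; exact (hval a (hdom' ▸ ha)).symm
  constructor
  · ext a
    constructor
    · rintro ⟨c, hc⟩; exact ⟨c, key S T hdom hval a c hc⟩
    · rintro ⟨c, hc⟩; exact ⟨c, key T S hdom' hval' a c hc⟩
  · intro a c
    exact ⟨key S T hdom hval a c, key T S hdom' hval' a c⟩
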